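/- Let M be an S-module over S = R[d]/(d(d−t)) (R a complete DVR with uniformizer t), finitely generated free over R. Let d̄ be the induced endomorphism of M/tM (so d̄² = 0). For v̄ ∈ ker d̄ with lift v ∈ M, the element w := t⁻¹dv lies in M, its image w̄ lies in ker d̄, and w̄ mod im d̄ is independent of the choice of lift v. Moreover the induced map ē on ker d̄/im d̄ satisfies ē² = ē. -/

import Mathlib

/-- Let `R` be a complete DVR with uniformizer `t`, and `M` an
`S = R[d]/(d(d−t))`-module, free of finite rank over `R` (so `d ∘ d = t • d`).
Working with representatives for the reduction `M/tM` (with induced map `d̄`,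
`d̄² = 0`): if `v̄ ∈ ker d̄`, i.e. `d v = t • w` for some `w ∈ M`
(`w = t⁻¹ d v` lies in `M`), then:
(1) `w̄ ∈ ker d̄`, i.e. `d w ∈ tM`;
(2) `w̄` modulo `im d̄` is independent of the choice of the lift `v`: if
`v₁ ≡ v₂ (mod tM)`, `d v₁ = t • w₁`, `d v₂ = t • w₂`, then `w₁ − w₂ ∈ d M + t M`;
(3) the induced map `ē` on `ker d̄ / im d̄` is idempotent: if `d v = t • w` and
`d w = t • u` then `u − w ∈ d M + t M`. -/
theorem stmt6 (R : Type*) [CommRing R] [IsDomain R] [IsDiscreteValuationRing R]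
    [IsLocalRing R] [IsAdicComplete (IsLocalRing.maximalIdeal R) R]
    (t : R) (ht : Irreducible t)
    (M : Type*) [AddCommGroup M] [Module R M] [Module.Free R M] [Module.Finite R M]
    (d : M →ₗ[R] M) (hd : d ∘ₗ d = t • d) :
    (∀ v w : M, d v = t • w → ∃ u : M, d w = t • u) ∧
    (∀ v₁ v₂ w₁ w₂ : M, d v₁ = t • w₁ → d v₂ = t • w₂ →
      (∃ m : M, v₁ - v₂ = t • m) → ∃ a b : M, w₁ - w₂ = d a + t • b) ∧
    (∀ v w u : M, d v = t • w → d w = t • u → ∃ a b : M, u - w = d a + t • b) := by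
  have htne : t ≠ 0 := ht.ne_zero
  have hinj : Function.Injective (fun x : M => t • x) :=
    smul_right_injective M htne
  have key : ∀ v w : M, d v = t • w → d w = t • w := by
    intro v w hvw
    have h1 : d (d v) = t • d v := by
      have := congrArg (fun f : M →ₗ[R] M => f v) hd
      simpa using this
    rw [hvw, map_smul] at h1
    exact hinj h1
  refine ⟨fun v w hvw => ⟨w, key v w hvw⟩, ?_, ?_⟩
  · intro v₁ v₂ w₁ w₂ h1 h2 ⟨m, hm⟩
    refine ⟨m, 0, ?_⟩
    apply hinj
    simp only [smul_sub, smul_zero, add_zero, ← h1, ← h2, ← map_sub, hm, map_smul]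
  · intro v w u hvw hwu
    have : t • u = t • w := by rw [← hwu, key v w hvw]
    refine ⟨0, 0, by simp [hinj this]⟩
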